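/- Let Â₊, Â₋ be elements of an associative ℝ-algebra A and p₀ > 0. For the quantum algebra V^ℏ with structure constants μ̂₁₂¹ = Â₋/√(2p₀), μ̂₁₂² = −Â₊/√(2p₀), μ̂₂₃³ = −Â₋/√(2p₀), μ̂₃₁³ = Â₊/√(2p₀), all others zero, the quantum Jacobian of the basis triple (e₁,e₂,e₃) has first and second coordinates zero, and third coordinate equal to (1/p₀)[Â₊, Â₋] = (1/p₀)(Â₊Â₋ − Â₋Â₊). In particular V^ℏ is a Lie algebra if and only if Â₊ and Â₋ commute. -/
import Mathlib


/-- Antisymmetric bracket on the rank-3 free module over an ℝ-algebra `A`,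
defined by structure constants `m i j k ∈ A`. -/
noncomputable def qbkt {A : Type*} [Ring A] [Algebra ℝ A]
    (m : Fin 3 → Fin 3 → Fin 3 → A) (x y : Fin 3 → A) : Fin 3 → A :=
  fun k => ∑ i : Fin 3, ∑ j : Fin 3, x i * y j * m i j k

/-- The quantum Jacobian `Ĵ(x,y,z) = [[x,y],z] + [[y,z],x] + [[z,x],y]`. -/
noncomputable def qjac {A : Type*} [Ring A] [Algebra ℝ A]
    (m : Fin 3 → Fin 3 → Fin 3 → A) (x y z : Fin 3 → A) : Fin 3 → A :=
  qbkt m (qbkt m x y) z + qbkt m (qbkt m y z) x + qbkt m (qbkt m z x) y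

/-- Structure constants of the quantum algebra V^ℏ:
`μ̂₁₂¹ = Â₋/√(2p₀)`, `μ̂₁₂² = −Â₊/√(2p₀)`, `μ̂₂₃³ = −Â₋/√(2p₀)`, `μ̂₃₁³ = Â₊/√(2p₀)`. -/
noncomputable def muVh {A : Type*} [Ring A] [Algebra ℝ A]
    (Ap Am : A) (p₀ : ℝ) : Fin 3 → Fin 3 → Fin 3 → A :=
  ![![![0, 0, 0], ![(Real.sqrt (2 * p₀))⁻¹ • Am, -((Real.sqrt (2 * p₀))⁻¹ • Ap), 0],
      ![0, 0, -((Real.sqrt (2 * p₀))⁻¹ • Ap)]],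
    ![![-((Real.sqrt (2 * p₀))⁻¹ • Am), (Real.sqrt (2 * p₀))⁻¹ • Ap, 0], ![0, 0, 0],
      ![0, 0, -((Real.sqrt (2 * p₀))⁻¹ • Am)]],
    ![![0, 0, (Real.sqrt (2 * p₀))⁻¹ • Ap], ![0, 0, (Real.sqrt (2 * p₀))⁻¹ • Am],
      ![0, 0, 0]]]


set_option linter.unnecessarySeqFocus false
set_option linter.unreachableTactic false
set_option linter.unusedTactic false
set_option maxHeartbeats 2000000

theorem qbkt_basis {A : Type*} [Ring A] [Algebra ℝ A]
    (m : Fin 3 → Fin 3 → Fin 3 → A) (i j : Fin 3) :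
    qbkt m (fun l => if l = i then 1 else 0) (fun l => if l = j then 1 else 0)
      = m i j := by
  funext k
  fin_cases i <;> fin_cases j <;> simp [qbkt, Fin.sum_univ_three]

theorem qjac_basis {A : Type*} [Ring A] [Algebra ℝ A]
    (m : Fin 3 → Fin 3 → Fin 3 → A) (i j k : Fin 3) :
    qjac m (fun l => if l = i then 1 else 0) (fun l => if l = j then 1 else 0)
      (fun l => if l = k then 1 else 0)
      = fun l => ∑ a : Fin 3, (m i j a * m a k l + m j k a * m a i l + m k i a * m a j l) := by
  funext l
  simp only [qjac, qbkt_basis, Pi.add_apply, qbkt, Finset.sum_add_distrib]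
  congr 1
  · congr 1
    · fin_cases k <;> simp [Fin.sum_univ_three]
    · fin_cases i <;> simp [Fin.sum_univ_three]
  · fin_cases j <;> simp [Fin.sum_univ_three]

/-- For V^ℏ, the quantum Jacobian of `(e₁,e₂,e₃)` is `(0, 0, (1/p₀)[Â₊,Â₋])`;
in particular V^ℏ is a Lie algebra (Jacobi on all basis triples) iff `Â₊` and `Â₋`
commute. -/
theorem Vh_jacobian {A : Type*} [Ring A] [Algebra ℝ A]
    (Ap Am : A) (p₀ : ℝ) (hp₀ : 0 < p₀) :
    qjac (muVh Ap Am p₀)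
        (fun l => if l = 0 then 1 else 0)
        (fun l => if l = 1 then 1 else 0)
        (fun l => if l = 2 then 1 else 0)
      = ![0, 0, p₀⁻¹ • (Ap * Am - Am * Ap)] ∧
    ((∀ i j k : Fin 3,
        qjac (muVh Ap Am p₀)
          (fun l => if l = i then 1 else 0)
          (fun l => if l = j then 1 else 0)
          (fun l => if l = k then 1 else 0) = 0) ↔ Ap * Am = Am * Ap) := by
  have hc : (Real.sqrt (2 * p₀))⁻¹ * (Real.sqrt (2 * p₀))⁻¹ = (2 * p₀)⁻¹ := by
    rw [← mul_inv, Real.mul_self_sqrt (by linarith)]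
  have hmain : qjac (muVh Ap Am p₀)
        (fun l => if l = 0 then 1 else 0)
        (fun l => if l = 1 then 1 else 0)
        (fun l => if l = 2 then 1 else 0)
      = ![0, 0, p₀⁻¹ • (Ap * Am - Am * Ap)] := by
    rw [qjac_basis]
    funext l
    fin_cases l <;>
      simp [muVh, Fin.sum_univ_three, mul_smul_comm, smul_mul_assoc, smul_smul, hc,
        Matrix.vecHead, Matrix.vecTail, -Real.sqrt_mul, -Real.sqrt_mul', mul_inv] <;>
      module
  refine ⟨hmain, ?_, ?_⟩
  · intro hall
    have h2 := congrFun ((hmain ▸ hall 0 1 2 :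
      (![0, 0, p₀⁻¹ • (Ap * Am - Am * Ap)] : Fin 3 → A) = 0)) 2
    simp only [Matrix.cons_val_two, Matrix.tail_cons, Matrix.head_cons, Pi.zero_apply,
      smul_eq_zero, inv_eq_zero] at h2
    rcases h2 with h | h
    · exact absurd h (by positivity)
    · exact sub_eq_zero.mp h
  · intro h i j k
    rw [qjac_basis]
    funext l
    fin_cases i <;> fin_cases j <;> fin_cases k <;> fin_cases l <;>
      simp [muVh, Fin.sum_univ_three, mul_smul_comm, smul_mul_assoc, smul_smul, hc,
        Matrix.vecHead, Matrix.vecTail, -Real.sqrt_mul, -Real.sqrt_mul', mul_inv, h] <;>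
      module
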